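/- Let Γ be a finite set of nonnegative integers containing 0, with E := #(Γ ∩ 2ℤ) and O := #(Γ ∩ (2ℤ+1)), and assume O < E. Then there exist real numbers α_1, ..., α_O such that f(x) = sin(πx) + Σ_{k=1}^{O} α_k sin((2k+1)πx) satisfies f^{(γ)}(n) = 0 for every γ ∈ Γ and every integer n. -/

import Mathlib

open Real Polynomial Matrix

private lemma support_X_mul'' (r : ℝ[X]) : (X * r).support = r.support.image (· + 1) := by
  ext i
  cases i with
  | zero => simp [coeff_X_mul_zero]
  | succ n => simp [coeff_X_mul]

private lemma descartes_aux : ∀ d : ℕ, ∀ p : ℝ[X], p.natDegree ≤ d → p ≠ 0 →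
    (p.roots.toFinset.filter (fun x => 0 < x)).card < p.support.card := by
  intro d
  induction d using Nat.strong_induction_on with
  | _ d IH =>
    intro p hdeg hp
    by_cases h0 : p.coeff 0 = 0
    · obtain ⟨r, hr⟩ := (Polynomial.X_dvd_iff).2 h0
      have hrne : r ≠ 0 := by rintro rfl; rw [mul_zero] at hr; exact hp hr
      have hnd : p.natDegree = r.natDegree + 1 := by rw [hr, natDegree_X_mul hrne]
      have hdlt : r.natDegree < d := by omega
      have hroots : p.roots = 0 ::ₘ r.roots := by
        rw [hr, roots_mul (hr ▸ hp), roots_X]; rfl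
      have hfilter : p.roots.toFinset.filter (fun x => 0 < x)
          = r.roots.toFinset.filter (fun x => 0 < x) := by
        rw [hroots, Multiset.toFinset_cons, Finset.filter_insert, if_neg (lt_irrefl 0)]
      have hsupp : p.support.card = r.support.card := by
        rw [hr, support_X_mul'', Finset.card_image_of_injective _ (add_left_injective 1)]
      rw [hfilter, hsupp]
      exact IH r.natDegree hdlt r le_rfl hrne
    · by_cases hp' : derivative p = 0
      · have hc : p = C (p.coeff 0) := eq_C_of_natDegree_eq_zero
          (natDegree_eq_zero_of_derivative_eq_zero hp')
        rw [hc, roots_C, support_C h0]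
        simp
      · have hnd0 : p.natDegree ≠ 0 := by
          intro h
          exact hp' (by rw [eq_C_of_natDegree_eq_zero h]; simp)
        have hdd : (derivative p).natDegree < p.natDegree := natDegree_derivative_lt hnd0
        have hIHd : ((derivative p).roots.toFinset.filter (fun x => 0 < x)).card
            < (derivative p).support.card :=
          IH (derivative p).natDegree (lt_of_lt_of_le hdd hdeg) _ le_rfl hp'
        have hsub : (derivative p).support ⊆ (p.support.erase 0).image Nat.pred := by
          intro i hi
          have : p.coeff (i + 1) ≠ 0 := by
            intro h
            apply Polynomial.mem_support_iff.1 hi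
            rw [Polynomial.coeff_derivative, h, zero_mul]
          refine Finset.mem_image.2 ⟨i + 1, ?_, rfl⟩
          exact Finset.mem_erase.2 ⟨Nat.succ_ne_zero i, Polynomial.mem_support_iff.2 this⟩
        have hcard : (derivative p).support.card ≤ p.support.card - 1 := by
          calc (derivative p).support.card ≤ ((p.support.erase 0).image Nat.pred).card :=
                Finset.card_le_card hsub
            _ ≤ (p.support.erase 0).card := Finset.card_image_le
            _ = p.support.card - 1 := by
                rw [Finset.card_erase_of_mem (Polynomial.mem_support_iff.2 h0)]
        have hrolle : (p.roots.toFinset.filter (fun x => 0 < x)).card ≤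
            ((derivative p).roots.toFinset.filter (fun x => 0 < x)).card + 1 := by
          have key := Finset.card_le_diff_of_interleaved
            (s := p.roots.toFinset.filter (fun x => 0 < x))
            (t := (derivative p).roots.toFinset.filter (fun x => 0 < x)) ?_
          · exact le_trans key (by
              gcongr
              exact Finset.sdiff_subset)
          · intro x hx y hy hxy _
            rw [Finset.mem_filter, Multiset.mem_toFinset, mem_roots hp] at hx hy
            obtain ⟨z, hz1, hz2⟩ := exists_deriv_eq_zero hxy p.continuousOn (hx.1.trans hy.1.symm)
            refine ⟨z, ?_, hz1⟩
            rw [Finset.mem_filter, Multiset.mem_toFinset, mem_roots hp']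
            exact ⟨by rwa [IsRoot, ← p.deriv], lt_trans hx.2 hz1.1⟩
        have h1 : 1 ≤ p.support.card :=
          Finset.card_pos.2 ⟨0, Polynomial.mem_support_iff.2 h0⟩
        omega

private lemma descartes_aux' (p : Polynomial ℝ) (hp : p ≠ 0) :
    (p.roots.toFinset.filter (fun x => 0 < x)).card < p.support.card :=
  descartes_aux p.natDegree p le_rfl hp

private lemma solve_system (O : ℕ) (e : Fin O → ℕ) (he : Function.Injective e) :
    ∃ α : Fin O → ℝ, ∀ j : Fin O,
      ∑ k : Fin O, (2 * ((k : ℕ) + 1) + 1 : ℝ) ^ e j * α k = -1 := by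
  classical
  set A : Matrix (Fin O) (Fin O) ℝ := fun j k => (2 * ((k : ℕ) + 1) + 1 : ℝ) ^ e j with hA
  have hdet : Aᵀ.det ≠ 0 := by
    intro hd
    obtain ⟨v, hv0, hv⟩ := (Matrix.exists_mulVec_eq_zero_iff).2 hd
    set p : Polynomial ℝ := ∑ k : Fin O, C (v k) * X ^ e k with hp
    have hcoeff : ∀ k : Fin O, p.coeff (e k) = v k := by
      intro k
      rw [hp, Polynomial.finset_sum_coeff]
      rw [Finset.sum_eq_single k]
      · simp [coeff_X_pow]
      · intro b _ hbk
        rw [coeff_C_mul, coeff_X_pow, if_neg (fun h => hbk (he h.symm)), mul_zero]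
      · simp
    have hpne : p ≠ 0 := by
      obtain ⟨k0, hk0⟩ := Function.ne_iff.1 hv0
      intro h
      exact hk0 (by rw [← hcoeff k0, h]; simp)
    have hsupp : p.support.card ≤ O := by
      have : p.support ⊆ Finset.univ.image e := by
        intro i hi
        by_contra hne
        apply Polynomial.mem_support_iff.1 hi
        rw [hp, Polynomial.finset_sum_coeff]
        apply Finset.sum_eq_zero
        intro k _
        have hki : e k ≠ i := fun h => hne (Finset.mem_image.2 ⟨k, Finset.mem_univ _, h⟩)
        rw [coeff_C_mul, coeff_X_pow, if_neg (fun h => hki h.symm), mul_zero]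
      calc p.support.card ≤ (Finset.univ.image e).card := Finset.card_le_card this
        _ ≤ (Finset.univ : Finset (Fin O)).card := Finset.card_image_le
        _ = O := by simp
    have hroots : (Finset.univ.image (fun j : Fin O => (2 * ((j : ℕ) + 1) + 1 : ℝ)))
        ⊆ p.roots.toFinset.filter (fun x => 0 < x) := by
      intro x hx
      obtain ⟨j, _, rfl⟩ := Finset.mem_image.1 hx
      have heval : p.eval (2 * ((j : ℕ) + 1) + 1 : ℝ) = 0 := by
        have h1 := congrFun hv j
        have h2 : ∀ k, Aᵀ j k = (2 * ((j : ℕ) + 1) + 1 : ℝ) ^ e k := fun k => rfl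
        simp only [Matrix.mulVec, dotProduct, Pi.zero_apply, h2] at h1
        rw [hp, Polynomial.eval_finset_sum]
        simp only [eval_mul, eval_C, eval_pow, eval_X]
        rw [← h1]
        exact Finset.sum_congr rfl fun k _ => mul_comm _ _
      refine Finset.mem_filter.2 ⟨Multiset.mem_toFinset.2 ((mem_roots hpne).2 heval), by positivity⟩
    have hinj : Function.Injective (fun j : Fin O => (2 * ((j : ℕ) + 1) + 1 : ℝ)) := by
      intro a b h
      simp only at h
      have : ((a : ℕ) : ℝ) = ((b : ℕ) : ℝ) := by linarith
      exact Fin.ext (Nat.cast_injective this)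
    have hO : O ≤ (p.roots.toFinset.filter (fun x => 0 < x)).card := by
      calc O = (Finset.univ.image (fun j : Fin O => (2 * ((j : ℕ) + 1) + 1 : ℝ))).card := by
            rw [Finset.card_image_of_injective _ hinj, Finset.card_univ, Fintype.card_fin]
        _ ≤ _ := Finset.card_le_card hroots
    exact absurd (descartes_aux' p hpne) (by omega)
  have hdetA : IsUnit A.det := by
    rw [← Matrix.det_transpose]
    exact isUnit_iff_ne_zero.2 hdet
  refine ⟨A⁻¹.mulVec (fun _ => -1), fun j => ?_⟩
  have h1 : A.mulVec (A⁻¹.mulVec (fun _ => -1)) = fun _ => -1 := by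
    rw [Matrix.mulVec_mulVec, Matrix.mul_nonsing_inv A hdetA, Matrix.one_mulVec]
  have h2 := congrFun h1 j
  simpa [Matrix.mulVec, dotProduct, hA] using h2

private lemma iter_sin {ι : Type*} (s : Finset ι) (b c : ι → ℝ) (γ : ℕ) :
    iteratedDeriv γ (fun x => ∑ i ∈ s, b i * Real.sin (c i * x))
      = fun x => ∑ i ∈ s, b i * (c i) ^ γ * Real.sin (c i * x + γ * (π / 2)) := by
  induction γ with
  | zero => simp
  | succ γ IH =>
    rw [iteratedDeriv_succ, IH]
    funext x
    have hterm : ∀ i : ι, HasDerivAt (fun x => b i * (c i) ^ γ * Real.sin (c i * x + γ * (π / 2)))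
        (b i * (c i) ^ (γ + 1) * Real.sin (c i * x + (γ + 1 : ℕ) * (π / 2))) x := by
      intro i
      have h1 : HasDerivAt (fun x : ℝ => c i * x + γ * (π / 2)) (c i) x := by
        simpa using ((hasDerivAt_id x).const_mul (c i)).add_const ((γ : ℝ) * (π / 2))
      have h2 := (Real.hasDerivAt_sin (c i * x + γ * (π / 2))).comp x h1
      have h3 := h2.const_mul (b i * (c i) ^ γ)
      convert h3 using 1
      · rfl
      · rfl
      · rfl
      have : ((γ + 1 : ℕ) : ℝ) * (π / 2) = γ * (π / 2) + π / 2 := by push_cast; ring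
      rw [this, ← add_assoc, Real.sin_add_pi_div_two]
      ring
    rw [deriv_fun_sum (fun i _ => (hterm i).differentiableAt)]
    exact Finset.sum_congr rfl fun i _ => (hterm i).deriv

private lemma sin_term_even (m n : ℤ) (a : ℕ) :
    Real.sin ((m : ℝ) * π * n + ((2 * a : ℕ) : ℝ) * (π / 2)) = 0 := by
  have h1 : (m : ℝ) * π * n + ((2 * a : ℕ) : ℝ) * (π / 2) = ((m * n + a : ℤ) : ℝ) * π := by
    push_cast; ring
  rw [h1, Real.sin_int_mul_pi]

private lemma sin_term_odd (m n : ℤ) (a : ℕ) (hm : Odd m) :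
    Real.sin ((m : ℝ) * π * n + ((2 * a + 1 : ℕ) : ℝ) * (π / 2)) = (-1 : ℝ) ^ ((n : ℤ) + a) := by
  have h1 : (m : ℝ) * π * n + ((2 * a + 1 : ℕ) : ℝ) * (π / 2)
      = ((m * n + a : ℤ) : ℝ) * π + π / 2 := by push_cast; ring
  rw [h1, Real.sin_add_pi_div_two]
  have h2 : ((m * n + a : ℤ) : ℝ) * π = 0 + ((m * n + a : ℤ) : ℝ) * π := by ring
  rw [h2, Real.cos_add_int_mul_pi, Real.cos_zero, mul_one]
  obtain ⟨t, rfl⟩ := hm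
  have h3 : (2 * t + 1) * n + (a : ℤ) = 2 * (t * n) + (n + a) := by ring
  rw [h3, zpow_add₀ (by norm_num : (-1 : ℝ) ≠ 0), _root_.zpow_mul]
  norm_num

theorem stmt_16 (Γ : Finset ℕ) (h0 : 0 ∈ Γ)
    (E O : ℕ) (hE : (Γ.filter (fun m => Even m)).card = E)
    (hO : (Γ.filter (fun m => Odd m)).card = O) (hOE : O < E) :
    ∃ α : Fin O → ℝ,
      ∀ γ ∈ Γ, ∀ n : ℤ,
        iteratedDeriv γ
          (fun x : ℝ => Real.sin (Real.pi * x) +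
            ∑ k : Fin O, α k * Real.sin ((2 * ((k : ℕ) + 1) + 1) * Real.pi * x))
          (n : ℝ) = 0 := by
  classical
  set Γodd := Γ.filter (fun m => Odd m) with hΓodd
  have e' : Fin O ≃o Γodd := Γodd.orderIsoOfFin hO
  set e : Fin O → ℕ := fun j => (e' j : ℕ) with he'
  have he : Function.Injective e := by
    intro a b h
    exact e'.injective (Subtype.ext h)
  obtain ⟨α, hα⟩ := solve_system O e he
  refine ⟨α, fun γ hγ n => ?_⟩
  -- the multiplier and coefficient families, indexed by Option (Fin O)
  set M : Option (Fin O) → ℤ := fun i => i.elim 1 (fun k => 2 * ((k : ℕ) + 1) + 1) with hM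
  set b : Option (Fin O) → ℝ := fun i => i.elim 1 α with hb
  have hModd : ∀ i, Odd (M i) := by
    rintro (_ | k)
    · exact ⟨0, by simp [hM]⟩
    · exact ⟨(k : ℕ) + 1, by simp [hM]; try push_cast; try ring⟩
  have hfun : (fun x : ℝ => Real.sin (Real.pi * x) +
      ∑ k : Fin O, α k * Real.sin ((2 * ((k : ℕ) + 1) + 1) * Real.pi * x))
      = fun x => ∑ i : Option (Fin O), b i * Real.sin (((M i : ℝ) * π) * x) := by
    funext x
    rw [Fintype.sum_option]
    congr 1
    · simp [hb, hM]
    · refine Finset.sum_congr rfl fun k _ => ?_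
      simp only [hb, hM, Option.elim]
      push_cast
      ring_nf
  rw [hfun]
  have hid := congrFun (iter_sin (Finset.univ) b (fun i => (M i : ℝ) * π) γ) ((n : ℤ) : ℝ)
  rw [hid]
  rcases Nat.even_or_odd γ with hγe | hγo
  · obtain ⟨a, ha⟩ := hγe
    have ha' : γ = 2 * a := by omega
    apply Finset.sum_eq_zero
    intro i _
    have : ((M i : ℝ) * π) * (n : ℝ) + (γ : ℝ) * (π / 2)
        = (M i : ℝ) * π * n + ((2 * a : ℕ) : ℝ) * (π / 2) := by
      rw [ha']; try push_cast; try ring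
    rw [this, sin_term_even, mul_zero]
  · obtain ⟨a, ha⟩ := hγo
    -- γ ∈ Γodd, get the index j
    have hγo' : γ ∈ Γodd := Finset.mem_filter.2 ⟨hγ, ⟨a, by omega⟩⟩
    obtain ⟨j, hj⟩ := e'.surjective ⟨γ, hγo'⟩
    have hej : e j = γ := by simpa using congrArg Subtype.val hj
    have hsin : ∀ i : Option (Fin O),
        Real.sin (((M i : ℝ) * π) * (n : ℝ) + (γ : ℝ) * (π / 2)) = (-1 : ℝ) ^ ((n : ℤ) + a) := by
      intro i
      have : ((M i : ℝ) * π) * (n : ℝ) + (γ : ℝ) * (π / 2)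
          = (M i : ℝ) * π * n + ((2 * a + 1 : ℕ) : ℝ) * (π / 2) := by
        rw [ha]; try push_cast; try ring
      rw [this, sin_term_odd _ _ _ (hModd i)]
    have hsum : ∑ i : Option (Fin O), b i * ((M i : ℝ) * π) ^ γ *
        Real.sin (((M i : ℝ) * π) * (n : ℝ) + (γ : ℝ) * (π / 2))
        = (∑ i : Option (Fin O), b i * (M i : ℝ) ^ γ) * (π ^ γ * (-1 : ℝ) ^ ((n : ℤ) + a)) := by
      rw [Finset.sum_mul]
      refine Finset.sum_congr rfl fun i _ => ?_
      rw [hsin i, mul_pow]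
      ring
    rw [hsum]
    have hz : ∑ i : Option (Fin O), b i * (M i : ℝ) ^ γ = 0 := by
      rw [Fintype.sum_option]
      have h1 : (b none : ℝ) * (M none : ℝ) ^ γ = 1 := by simp [hb, hM]
      have h2 : ∀ k : Fin O, b (some k) * (M (some k) : ℝ) ^ γ
          = (2 * ((k : ℕ) + 1) + 1 : ℝ) ^ e j * α k := by
        intro k
        rw [hej]
        simp only [hb, hM, Option.elim]
        push_cast
        ring
      rw [h1, Finset.sum_congr rfl (fun k _ => h2 k), hα j]
      ring
    rw [hz, zero_mul]
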